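/- Let 0 ≤ μ < σ and ξ ∈ [−1, 0). Let F be the Generalized Pareto cdf F(u) = 1 − (1 + ξ(u − μ)/σ)^{−1/ξ} on [μ, μ − σ/ξ], extended by F(u) = 0 for u < μ and F(u) = 1 for u > μ − σ/ξ, with density f = F' on (μ, μ − σ/ξ). Let K ≥ 2 be an integer, ψ(u) = (1 − ξ)u + ξμ − σ (so ψ⁻¹(t) = t/(1 − ξ) + r), r = (σ − ξμ)/(1 − ξ) (so ψ(r) = 0 and μ < r < μ − σ/ξ), and H(u) = u + F(u)/((K − 1)·f(u)) for u ∈ (μ, μ − σ/ξ). Fix x with r < x ≤ μ − σ/ξ. Then the function g(t) = (x − t)·F(t/(1 − ξ) + r)^{K−1} attains its maximum over t ∈ [0, x] at a unique point t*, and: if ψ⁻¹(x) ≤ lim_{u↓r} H(u) then t* = 0, while if ψ⁻¹(x) > lim_{u↓r} H(u) then t* > 0 and t* satisfies ψ⁻¹(x) = H(ψ⁻¹(t*)). -/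

import Mathlib

open Set Filter

lemma gpd_hasDerivAt (μ σ ξ : ℝ) (hσ : 0 < σ) (hξ : ξ ≠ 0) (hp : 1 ≤ -1/ξ) (u : ℝ) :
    HasDerivAt (fun v => 1 - (1 + ξ * (v - μ) / σ) ^ (-1/ξ))
      (1/σ * (1 + ξ * (u - μ) / σ) ^ (-1/ξ - 1)) u := by
  have hA : HasDerivAt (fun v => 1 + ξ * (v - μ) / σ) (ξ * 1 / σ) u :=
    ((((hasDerivAt_id u).sub_const μ).const_mul ξ).div_const σ).const_add 1
  have hB := hA.rpow_const (p := -1/ξ) (Or.inr hp)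
  have hC := (hasDerivAt_const u (1:ℝ)).sub hB
  refine hC.congr_deriv ?_
  field_simp
  ring

lemma gpd_deriv_identity (a b x t ξ : ℝ) (m : ℕ) (hb : b ≠ 0) (hc : (1:ℝ) - ξ ≠ 0) :
    -1 * a ^ (m + 1) + (x - t) * (((m:ℝ) + 1) * a ^ m * (b * (1 / (1 - ξ)))) =
    ((m:ℝ) + 2 - 1) * a ^ m * b * ((x - t) / (1 - ξ) - a / (((m:ℝ) + 2 - 1) * b)) := by
  have hm1 : ((m:ℝ)+1) ≠ 0 := by positivity
  have hm2 : ((m:ℝ)+2-1) ≠ 0 := by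
    intro h; nlinarith [Nat.cast_nonneg (α:=ℝ) m]
  field_simp
  ring

set_option maxHeartbeats 2000000 in
theorem optimal_virtualized_bid_generalized_pareto
    (μ σ ξ : ℝ) (hμ : 0 ≤ μ) (hμσ : μ < σ) (hξneg : ξ < 0) (hξge : -1 ≤ ξ)
    (K : ℕ) (hK : 2 ≤ K) (F : ℝ → ℝ)
    (hFlow : ∀ u, u < μ → F u = 0)
    (hFhigh : ∀ u, μ - σ / ξ < u → F u = 1)
    (hFmid : ∀ u ∈ Set.Icc μ (μ - σ / ξ),
      F u = 1 - (1 + ξ * (u - μ) / σ) ^ (-1 / ξ))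
    (r : ℝ) (hr : r = (σ - ξ * μ) / (1 - ξ))
    (H : ℝ → ℝ)
    (hH : ∀ u ∈ Set.Ioo μ (μ - σ / ξ),
      H u = u + F u / (((K : ℝ) - 1) * deriv F u))
    (x : ℝ) (hxr : r < x) (hxtop : x ≤ μ - σ / ξ)
    (g : ℝ → ℝ) (hg : ∀ t, g t = (x - t) * (F (t / (1 - ξ) + r)) ^ (K - 1)) :
    ∃ tstar ∈ Set.Icc (0 : ℝ) x,
      IsMaxOn g (Set.Icc 0 x) tstar ∧
      (∀ t ∈ Set.Icc (0 : ℝ) x, IsMaxOn g (Set.Icc 0 x) t → t = tstar) ∧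
      ∀ L : ℝ, Filter.Tendsto H (nhdsWithin r (Set.Ioi r)) (nhds L) →
        ((x / (1 - ξ) + r ≤ L → tstar = 0) ∧
         (L < x / (1 - ξ) + r →
           0 < tstar ∧ x / (1 - ξ) + r = H (tstar / (1 - ξ) + r))) := by
  have hσ : 0 < σ := lt_of_le_of_lt hμ hμσ
  have hξ : ξ ≠ 0 := ne_of_lt hξneg
  have hc : 0 < 1 - ξ := by linarith
  have hcne : (1 : ℝ) - ξ ≠ 0 := ne_of_gt hc
  set top := μ - σ / ξ with htop
  clear_value top
  have hμtop : μ < top := by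
    have : σ / ξ < 0 := div_neg_of_pos_of_neg hσ hξneg
    simp only [htop]; linarith
  have hμr : μ < r := by
    rw [hr, lt_div_iff₀ hc]; nlinarith
  have hr0 : 0 < r := lt_of_le_of_lt hμ hμr
  have hx0 : 0 < x := lt_trans hr0 hxr
  have hξtop : -ξ * top = σ - ξ * μ := by rw [htop]; field_simp; ring
  have hrc : r * (1 - ξ) = σ - ξ * μ := by rw [hr]; field_simp
  have htoprc : (top - r) * (1 - ξ) = top := by nlinarith
  have htop0 : 0 < top := lt_of_le_of_lt hμ hμtop
  have hrtop : r < top := by nlinarith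
  set T := x / (1 - ξ) + r with hT
  clear_value T
  have hrT : r < T := by
    have : 0 < x / (1 - ξ) := div_pos hx0 hc
    simp only [hT]; linarith
  have hTtop : T ≤ top := by
    have : x / (1 - ξ) ≤ top - r := by
      rw [div_le_iff₀ hc]; nlinarith
    simp only [hT]; linarith
  set A : ℝ → ℝ := fun u => 1 + ξ * (u - μ) / σ with hA
  clear_value A
  have hAcont : Continuous A := by rw [hA]; fun_prop
  have hAtop : A top = 0 := by simp only [hA, htop]; field_simp; ring
  have hAmono : ∀ u v : ℝ, u < v → A v < A u := by
    intro u v huv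
    simp only [hA]
    have h1 : ξ * (v - μ) < ξ * (u - μ) := by nlinarith
    have h2 := (div_lt_div_iff_of_pos_right hσ).mpr h1
    linarith
  have hApos : ∀ u, u < top → 0 < A u := fun u hu => hAtop ▸ hAmono u top hu
  have hAnonneg : ∀ u, u ≤ top → 0 ≤ A u := by
    intro u hu
    rcases eq_or_lt_of_le hu with h | h
    · simp [h, hAtop]
    · exact le_of_lt (hApos u h)
  have hAlt1 : ∀ u, μ < u → A u < 1 := by
    intro u hu
    have : A μ = 1 := by simp [hA]
    simpa [this] using hAmono μ u hu
  have hp1 : (1:ℝ) ≤ -1/ξ := by rw [le_div_iff_of_neg hξneg]; linarith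
  have hp0 : (0:ℝ) < -1/ξ := lt_of_lt_of_le one_pos hp1
  have hqle : 1/ξ + 1 ≤ 0 := by
    have : 1/ξ ≤ -1 := by rw [div_le_iff_of_neg hξneg]; linarith
    linarith
  have hK1 : (1:ℝ) ≤ (K:ℝ) - 1 := by
    have : (2:ℝ) ≤ (K:ℝ) := by exact_mod_cast hK
    linarith
  have hK1pos : (0:ℝ) < (K:ℝ) - 1 := lt_of_lt_of_le one_pos hK1
  set Ff : ℝ → ℝ := fun u => 1 - A u ^ (-1/ξ) with hFf
  clear_value Ff
  set ff : ℝ → ℝ := fun u => 1/σ * A u ^ (-1/ξ - 1) with hff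
  clear_value ff
  have hFeq : ∀ u ∈ Set.Icc μ top, F u = Ff u := by
    intro u hu
    rw [hFmid u hu, hFf, hA]
  have hFd : ∀ u, HasDerivAt Ff (ff u) u := by
    intro u
    rw [hFf, hff, hA]
    exact gpd_hasDerivAt μ σ ξ hσ hξ hp1 u
  have hderivF : ∀ u ∈ Set.Ioo μ top, deriv F u = ff u := by
    intro u hu
    have hev : F =ᶠ[nhds u] Ff :=
      Filter.eventuallyEq_of_mem (Ioo_mem_nhds hu.1 hu.2) (fun v hv => hFeq v (Ioo_subset_Icc_self hv))
    rw [hev.deriv_eq]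
    exact (hFd u).deriv
  have hffpos : ∀ u, u < top → 0 < ff u := by
    intro u hu
    rw [hff]
    exact mul_pos (by positivity) (Real.rpow_pos_of_pos (hApos u hu) _)
  have hFfpos : ∀ u, μ < u → u ≤ top → 0 < Ff u := by
    intro u h1 h2
    have := Real.rpow_lt_one (hAnonneg u h2) (hAlt1 u h1) hp0
    simp only [hFf]; linarith
  have hFfcont : Continuous Ff := by
    rw [hFf]
    apply continuous_const.sub
    exact hAcont.rpow_const (fun u => Or.inr (le_of_lt hp0))
  set H2 : ℝ → ℝ := fun u => u + σ/((K:ℝ)-1) * (A u ^ (1/ξ+1) - A u) with hH2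
  clear_value H2
  have hσne : σ ≠ 0 := ne_of_gt hσ
  have hK1ne : (K:ℝ) - 1 ≠ 0 := ne_of_gt hK1pos
  have hratio : ∀ u, μ < u → u < top →
      Ff u / (((K:ℝ)-1) * ff u) = σ/((K:ℝ)-1) * (A u ^ (1/ξ+1) - A u) := by
    intro u h1 h2
    have hA0 : 0 < A u := hApos u h2
    have e1 : A u ^ (1/ξ+1) * A u ^ (-1/ξ-1) = 1 := by
      rw [← Real.rpow_add hA0]
      have : (1/ξ+1) + (-1/ξ-1) = 0 := by ring
      rw [this, Real.rpow_zero]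
    have e2 : A u * A u ^ (-1/ξ-1) = A u ^ (-1/ξ) := by
      nth_rewrite 1 [← Real.rpow_one (A u)]
      rw [← Real.rpow_add hA0]
      norm_num
    have key : σ * (A u ^ (1/ξ+1) - A u) * ff u = Ff u := by
      have expand : σ * (A u ^ (1/ξ+1) - A u) * ff u
          = A u ^ (1/ξ+1) * A u ^ (-1/ξ-1) - A u * A u ^ (-1/ξ-1) := by
        simp only [hff]
        field_simp
      rw [expand, e1, e2, hFf]
    have hffne : ff u ≠ 0 := ne_of_gt (hffpos u h2)
    rw [← key]
    field_simp
  have hHeq : ∀ u ∈ Set.Ioo μ top, H u = H2 u := by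
    intro u hu
    rw [hH u hu, hFeq u (Ioo_subset_Icc_self hu), hderivF u hu, hratio u hu.1 hu.2, hH2]
  have hH2gt : ∀ u ∈ Set.Ioo μ top, u < H2 u := by
    intro u hu
    have hA0 : 0 < A u := hApos u hu.2
    have h1 : (1:ℝ) ≤ A u ^ (1/ξ+1) :=
      Real.one_le_rpow_of_pos_of_le_one_of_nonpos hA0 (le_of_lt (hAlt1 u hu.1)) hqle
    have h2 : A u < 1 := hAlt1 u hu.1
    have h3 : 0 < A u ^ (1/ξ+1) - A u := sub_pos.mpr (lt_of_lt_of_le h2 h1)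
    have h4 : 0 < σ/((K:ℝ)-1) * (A u ^ (1/ξ+1) - A u) := by positivity
    simp only [hH2]; linarith
  have hH2catIco : ∀ u ∈ Set.Ico μ top, ContinuousAt H2 u := by
    intro u hu
    have hA0 : A u ≠ 0 := ne_of_gt (hApos u hu.2)
    have h1 : ContinuousAt (fun v => A v ^ (1/ξ+1)) u :=
      hAcont.continuousAt.rpow_const (Or.inl hA0)
    rw [hH2]
    exact continuousAt_id.add (continuousAt_const.mul (h1.sub hAcont.continuousAt))
  have hH2deriv : ∀ u ∈ Set.Ioo μ top, HasDerivAt H2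
      (1 + σ/((K:ℝ)-1) * (ξ*1/σ * (1/ξ+1) * A u ^ (1/ξ+1-1) - ξ*1/σ)) u := by
    intro u hu
    have hAd : HasDerivAt A (ξ*1/σ) u := by
      rw [hA]
      exact ((((hasDerivAt_id u).sub_const μ).const_mul ξ).div_const σ).const_add 1
    have hpow := hAd.rpow_const (p := 1/ξ+1) (Or.inl (ne_of_gt (hApos u hu.2)))
    rw [hH2]
    exact (hasDerivAt_id u).add ((hpow.sub hAd).const_mul (σ/((K:ℝ)-1)))
  have hH2derivpos : ∀ u ∈ Set.Ioo μ top,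
      0 < 1 + σ/((K:ℝ)-1) * (ξ*1/σ * (1/ξ+1) * A u ^ (1/ξ+1-1) - ξ*1/σ) := by
    intro u hu
    have hA0 : 0 < A u := hApos u hu.2
    have e3 : (1:ℝ)/ξ+1-1 = 1/ξ := by ring
    rw [e3]
    have e4 : σ/((K:ℝ)-1) * (ξ*1/σ * (1/ξ+1) * A u ^ (1/ξ) - ξ*1/σ)
        = ((1+ξ) * A u ^ (1/ξ) - ξ)/((K:ℝ)-1) := by
      field_simp
    rw [e4]
    have h5 : 0 < A u ^ (1/ξ) := Real.rpow_pos_of_pos hA0 _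
    have h6 : 0 ≤ (1+ξ) * A u ^ (1/ξ) := mul_nonneg (by linarith) (le_of_lt h5)
    have h7 : 0 < ((1+ξ) * A u ^ (1/ξ) - ξ)/((K:ℝ)-1) := by
      apply div_pos (by linarith) hK1pos
    linarith
  have hH2mono : StrictMonoOn H2 (Set.Ico μ top) := by
    apply strictMonoOn_of_deriv_pos (convex_Ico μ top)
    · exact fun u hu => (hH2catIco u hu).continuousWithinAt
    · intro u hu
      rw [interior_Ico] at hu
      rw [(hH2deriv u hu).deriv]
      exact hH2derivpos u hu
  have humem : ∀ t ∈ Set.Icc (0:ℝ) x, t/(1-ξ)+r ∈ Set.Icc μ top := by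
    intro t ht
    constructor
    · have : 0 ≤ t/(1-ξ) := div_nonneg ht.1 (le_of_lt hc)
      linarith
    · have h1 : t/(1-ξ) ≤ x/(1-ξ) := by gcongr; exact ht.2
      simp only [hT] at hTtop
      linarith
  have humem' : ∀ t ∈ Set.Ioo (0:ℝ) x, t/(1-ξ)+r ∈ Set.Ioo r T := by
    intro t ht
    constructor
    · have : 0 < t/(1-ξ) := div_pos ht.1 hc
      linarith
    · have h1 : t/(1-ξ) < x/(1-ξ) := by gcongr; exact ht.2
      simp only [hT]
      linarith
  have hIooIoo : ∀ t ∈ Set.Ioo (0:ℝ) x, t/(1-ξ)+r ∈ Set.Ioo μ top := by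
    intro t ht
    obtain ⟨h1, h2⟩ := humem' t ht
    exact ⟨lt_trans hμr h1, lt_of_lt_of_le h2 hTtop⟩
  set G : ℝ → ℝ := fun t => (x - t) * (Ff (t/(1-ξ)+r))^(K-1) with hG
  clear_value G
  have hgeq : Set.EqOn g G (Set.Icc 0 x) := by
    intro t ht
    simp only [hG]
    rw [hg t, hFeq _ (humem t ht)]
  have hGcont : Continuous G := by
    rw [hG]
    apply (continuous_const.sub continuous_id).mul
    exact (hFfcont.comp (by fun_prop)).pow _
  have hgcont : ContinuousOn g (Set.Icc 0 x) := hGcont.continuousOn.congr hgeq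
  have hgderiv : ∀ t ∈ Set.Ioo (0:ℝ) x, deriv g t =
      ((K:ℝ)-1) * (Ff (t/(1-ξ)+r))^(K-2) * ff (t/(1-ξ)+r) * (T - H2 (t/(1-ξ)+r)) := by
    intro t ht
    set u := t/(1-ξ)+r with hu
    have huμtop : u ∈ Set.Ioo μ top := hIooIoo t ht
    have hev : g =ᶠ[nhds t] G :=
      Filter.eventuallyEq_of_mem (Ioo_mem_nhds ht.1 ht.2)
        (fun s hs => hgeq (Ioo_subset_Icc_self hs))
    rw [hev.deriv_eq]
    have hlin : HasDerivAt (fun s : ℝ => s/(1-ξ)+r) (1/(1-ξ)) t := by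
      simpa using ((hasDerivAt_id t).div_const (1-ξ)).add_const r
    have hcomp : HasDerivAt (fun s : ℝ => Ff (s/(1-ξ)+r)) (ff u * (1/(1-ξ))) t :=
      (hFd u).comp t hlin
    have hpow := hcomp.pow (K-1)
    have hmul : HasDerivAt (fun s : ℝ => (x - s) * (Ff (s/(1-ξ)+r))^(K-1))
        ((-1) * (Ff u)^(K-1) + (x - t) * (((K-1 : ℕ):ℝ) * (Ff u)^(K-1-1) * (ff u * (1/(1-ξ))))) t := by
      have := ((hasDerivAt_id t).const_sub x).mul hpow
      exact this
    rw [hG, hmul.deriv]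
    have hfune : ff u ≠ 0 := ne_of_gt (hffpos u huμtop.2)
    have hH2u : H2 u = u + Ff u/(((K:ℝ)-1)*ff u) := by
      simp only [hH2]
      rw [← hratio u huμtop.1 huμtop.2]
    have hTu : T - u = (x-t)/(1-ξ) := by
      simp only [hT, hu]; ring
    rw [hH2u, sub_add_eq_sub_sub, hTu]
    obtain ⟨m, hm⟩ : ∃ m, K = m + 2 := ⟨K - 2, by omega⟩
    subst hm
    have e1 : m + 2 - 1 = m + 1 := by omega
    have e2 : m + 2 - 2 = m := by omega
    have e3 : m + 2 - 1 - 1 = m := by omega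
    rw [e3, e2, e1]
    clear_value u
    clear hmul hpow hcomp hlin hev hgcont hGcont hgeq hTu hH2u hu huμtop
    obtain ⟨a, ha⟩ : ∃ a, Ff u = a := ⟨_, rfl⟩
    obtain ⟨b, hb⟩ : ∃ b, ff u = b := ⟨_, rfl⟩
    rw [hb] at hfune
    rw [ha, hb]
    have c1 : ((m+1 : ℕ):ℝ) = (m:ℝ)+1 := by push_cast; ring
    have c2 : ((m+2 : ℕ):ℝ) = (m:ℝ)+2 := by push_cast; ring
    rw [c1, c2]
    exact gpd_deriv_identity a b x t ξ m hfune hcne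
  have hH2catr : ContinuousAt H2 r := hH2catIco r ⟨le_of_lt hμr, hrtop⟩
  have hHtend : Filter.Tendsto H (nhdsWithin r (Set.Ioi r)) (nhds (H2 r)) := by
    have h1 : Filter.Tendsto H2 (nhdsWithin r (Set.Ioi r)) (nhds (H2 r)) :=
      hH2catr.continuousWithinAt.tendsto
    apply h1.congr'
    filter_upwards [mem_nhdsWithin_of_mem_nhds (Ioo_mem_nhds hμr hrtop)] with v hv
    exact (hHeq v hv).symm
  have hsignpos : ∀ t ∈ Set.Ioo (0:ℝ) x, H2 (t/(1-ξ)+r) < T → 0 < deriv g t := by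
    intro t ht hlt
    rw [hgderiv t ht]
    have hu := hIooIoo t ht
    have h1 : 0 < Ff (t/(1-ξ)+r) := hFfpos _ hu.1 (le_of_lt hu.2)
    have h2 : 0 < ff (t/(1-ξ)+r) := hffpos _ hu.2
    have h3 : 0 < T - H2 (t/(1-ξ)+r) := by linarith
    exact mul_pos (mul_pos (mul_pos hK1pos (pow_pos h1 _)) h2) h3
  have hsignneg : ∀ t ∈ Set.Ioo (0:ℝ) x, T < H2 (t/(1-ξ)+r) → deriv g t < 0 := by
    intro t ht hlt
    rw [hgderiv t ht]
    have hu := hIooIoo t ht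
    have h1 : 0 < Ff (t/(1-ξ)+r) := hFfpos _ hu.1 (le_of_lt hu.2)
    have h2 : 0 < ff (t/(1-ξ)+r) := hffpos _ hu.2
    have h3 : T - H2 (t/(1-ξ)+r) < 0 := by linarith
    exact mul_neg_of_pos_of_neg (mul_pos (mul_pos hK1pos (pow_pos h1 _)) h2) h3
  have hrIco : r ∈ Set.Ico μ top := ⟨le_of_lt hμr, hrtop⟩
  rcases le_or_gt T (H2 r) with hcase | hcase
  · -- maximizer at 0
    have hanti : StrictAntiOn g (Set.Icc 0 x) := by
      apply strictAntiOn_of_deriv_neg (convex_Icc 0 x) hgcont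
      intro t ht
      rw [interior_Icc] at ht
      apply hsignneg t ht
      have hu := humem' t ht
      have huIco : t/(1-ξ)+r ∈ Set.Ico μ top :=
        ⟨le_of_lt (lt_trans hμr hu.1), lt_of_lt_of_le hu.2 hTtop⟩
      have := hH2mono hrIco huIco hu.1
      linarith
    have h0mem : (0:ℝ) ∈ Set.Icc (0:ℝ) x := ⟨le_refl 0, le_of_lt hx0⟩
    refine ⟨0, h0mem, ?_, ?_, ?_⟩
    · rw [isMaxOn_iff]
      intro t ht
      rcases eq_or_lt_of_le ht.1 with he | hlt
      · rw [← he]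
      · exact le_of_lt (hanti h0mem ht hlt)
    · intro t ht hmax
      by_contra hne
      have hlt : (0:ℝ) < t := lt_of_le_of_ne ht.1 (Ne.symm hne)
      have h1 : g t < g 0 := hanti h0mem ht hlt
      have h2 : g 0 ≤ g t := hmax h0mem
      linarith
    · intro L hL
      have hLe : L = H2 r := tendsto_nhds_unique hL hHtend
      subst hLe
      exact ⟨fun _ => rfl, fun hlt => absurd hlt (not_lt.mpr hcase)⟩
  · -- interior maximizer
    have hKξ : 0 < (K:ℝ)-1-ξ := by linarith
    set ε := min ((top - r)/2) (σ/(2*((K:ℝ)-1-ξ))) with hε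
    clear_value ε
    have hεpos : 0 < ε := by
      rw [hε]
      exact lt_min (by linarith) (by positivity)
    have hε1 : ε ≤ (top - r)/2 := hε ▸ min_le_left _ _
    have hε2 : ε ≤ σ/(2*((K:ℝ)-1-ξ)) := hε ▸ min_le_right _ _
    have hε3 : ε*((K:ℝ)-1-ξ) ≤ σ/2 := by
      rw [le_div_iff₀ (by positivity)] at hε2
      linarith
    set u₀ := top - ε with hu₀
    clear_value u₀
    have hu₀top : u₀ < top := by rw [hu₀]; linarith
    have hru₀ : r < u₀ := by rw [hu₀]; linarith
    have hμu₀ : μ < u₀ := lt_trans hμr hru₀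
    have hAu₀ : A u₀ = -ξ*ε/σ := by
      rw [hA, hu₀, htop]
      field_simp
      ring
    have hTlt : T < H2 u₀ := by
      have hA0 : 0 < A u₀ := hApos u₀ hu₀top
      have hA1 : A u₀ ≤ 1 := le_of_lt (hAlt1 u₀ hμu₀)
      have h1 : (1:ℝ) ≤ A u₀ ^ (1/ξ+1) :=
        Real.one_le_rpow_of_pos_of_le_one_of_nonpos hA0 hA1 hqle
      have h2 : σ/((K:ℝ)-1) * (1 - A u₀) ≤ σ/((K:ℝ)-1) * (A u₀ ^ (1/ξ+1) - A u₀) := by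
        have hpos : 0 ≤ σ/((K:ℝ)-1) := by positivity
        apply mul_le_mul_of_nonneg_left (by linarith) hpos
      have h3 : σ/((K:ℝ)-1) * (1 - A u₀) = (σ + ξ*ε)/((K:ℝ)-1) := by
        rw [hAu₀]
        field_simp
        ring
      have h4 : ε*((K:ℝ)-1) < σ + ξ*ε := by nlinarith
      have h5 : ε < (σ + ξ*ε)/((K:ℝ)-1) := by
        rw [lt_div_iff₀ hK1pos]
        linarith
      rw [hH2]
      simp only
      rw [hu₀] at h2 h3 ⊢
      linarith
    have hIccIco : Set.Icc r u₀ ⊆ Set.Ico μ top :=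
      fun v hv => ⟨le_trans (le_of_lt hμr) hv.1, lt_of_le_of_lt hv.2 hu₀top⟩
    have hcont : ContinuousOn H2 (Set.Icc r u₀) :=
      fun v hv => (hH2catIco v (hIccIco hv)).continuousWithinAt
    obtain ⟨ustar, hust, hustT⟩ :=
      intermediate_value_Ioo (le_of_lt hru₀) hcont (Set.mem_Ioo.mpr ⟨hcase, hTlt⟩)
    have hustIoo : ustar ∈ Set.Ioo μ top :=
      ⟨lt_trans hμr hust.1, lt_trans hust.2 hu₀top⟩
    have hustIco : ustar ∈ Set.Ico μ top := ⟨le_of_lt hustIoo.1, hustIoo.2⟩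
    have hustT' : ustar < T := by
      rw [← hustT]
      exact hH2gt ustar hustIoo
    set tstar := (1-ξ)*(ustar - r) with hts
    clear_value tstar
    have htsmap : tstar/(1-ξ)+r = ustar := by
      rw [hts]
      field_simp
      ring
    have hts0 : 0 < tstar := by
      rw [hts]
      exact mul_pos hc (sub_pos.mpr hust.1)
    have htsx : tstar < x := by
      have h1 : ustar - r < x/(1-ξ) := by
        rw [hT] at hustT'
        linarith
      rw [hts]
      calc (1-ξ)*(ustar - r) < (1-ξ)*(x/(1-ξ)) := by
            exact mul_lt_mul_of_pos_left h1 hc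
        _ = x := by field_simp
    have htsmem : tstar ∈ Set.Icc (0:ℝ) x := ⟨le_of_lt hts0, le_of_lt htsx⟩
    have hmonoL : StrictMonoOn g (Set.Icc 0 tstar) := by
      apply strictMonoOn_of_deriv_pos (convex_Icc _ _)
        (hgcont.mono (Set.Icc_subset_Icc le_rfl (le_of_lt htsx)))
      intro t ht
      rw [interior_Icc] at ht
      have htx : t ∈ Set.Ioo 0 x := ⟨ht.1, lt_trans ht.2 htsx⟩
      apply hsignpos t htx
      have humem2 := hIooIoo t htx
      have hlt2 : t/(1-ξ)+r < ustar := by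
        have : t/(1-ξ) < tstar/(1-ξ) := by gcongr; exact ht.2
        linarith [htsmap]
      have := hH2mono ⟨le_of_lt humem2.1, humem2.2⟩ hustIco hlt2
      rwa [hustT] at this
    have hantiR : StrictAntiOn g (Set.Icc tstar x) := by
      apply strictAntiOn_of_deriv_neg (convex_Icc _ _)
        (hgcont.mono (Set.Icc_subset_Icc (le_of_lt hts0) le_rfl))
      intro t ht
      rw [interior_Icc] at ht
      have htx : t ∈ Set.Ioo 0 x := ⟨lt_trans hts0 ht.1, ht.2⟩
      apply hsignneg t htx
      have humem2 := hIooIoo t htx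
      have hgt2 : ustar < t/(1-ξ)+r := by
        have : tstar/(1-ξ) < t/(1-ξ) := by gcongr; exact ht.1
        linarith [htsmap]
      have := hH2mono hustIco ⟨le_of_lt humem2.1, humem2.2⟩ hgt2
      rwa [hustT] at this
    have hmax : IsMaxOn g (Set.Icc 0 x) tstar := by
      rw [isMaxOn_iff]
      intro t ht
      rcases le_or_gt t tstar with h | h
      · rcases eq_or_lt_of_le h with he | hlt
        · rw [he]
        · exact le_of_lt (hmonoL ⟨ht.1, h⟩ ⟨le_of_lt hts0, le_rfl⟩ hlt)
      · exact le_of_lt (hantiR ⟨le_rfl, le_of_lt htsx⟩ ⟨le_of_lt h, ht.2⟩ h)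
    refine ⟨tstar, htsmem, hmax, ?_, ?_⟩
    · intro t ht hmax'
      by_contra hne
      have h2 : g tstar ≤ g t := hmax' htsmem
      rcases lt_or_gt_of_ne hne with hlt | hgt
      · have := hmonoL ⟨ht.1, le_of_lt hlt⟩ ⟨le_of_lt hts0, le_rfl⟩ hlt
        linarith
      · have := hantiR ⟨le_rfl, le_of_lt htsx⟩ ⟨le_of_lt hgt, ht.2⟩ hgt
        linarith
    · intro L hL
      have hLe : L = H2 r := tendsto_nhds_unique hL hHtend
      subst hLe
      constructor
      · intro hle
        exact absurd hcase (not_lt.mpr hle)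
      · intro _
        refine ⟨hts0, ?_⟩
        rw [htsmap, hHeq ustar hustIoo, hustT]
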